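/- For all real constants c₁, c₂, κ₁, κ₂, the path x(t) = R(t)·(c₁ − t, c₂ + t)ᵀ + (κ₁, κ₂)ᵀ satisfies x''(t) = R(t)·((−1, −1)ᵀ + M(t)·x'(t)) with M(t) = ((sin t, −cos t), (cos t, sin t)), for all t ∈ ℝ. -/

import Mathlib

open Real

noncomputable def rot (t : ℝ) (p : ℝ × ℝ) : ℝ × ℝ :=
  (Real.cos t * p.1 - Real.sin t * p.2, Real.sin t * p.1 + Real.cos t * p.2)

private lemma hd1 (c₁ c₂ κ₁ κ₂ t : ℝ) :
    HasDerivAt (fun s : ℝ => ((Real.cos s * (c₁ - s) - Real.sin s * (c₂ + s) + κ₁,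
        Real.sin s * (c₁ - s) + Real.cos s * (c₂ + s) + κ₂) : ℝ × ℝ))
      (-Real.sin t * (c₁ - t) - Real.cos t * (c₂ + t) - Real.cos t - Real.sin t,
       Real.cos t * (c₁ - t) - Real.sin t * (c₂ + t) + Real.cos t - Real.sin t) t := by
  have hc : HasDerivAt (fun s : ℝ => c₁ - s) (-1) t := by
    simpa using (hasDerivAt_id t).const_sub c₁
  have hc2 : HasDerivAt (fun s : ℝ => c₂ + s) (1) t := by
    simpa using (hasDerivAt_id t).const_add c₂
  have h1 := ((((Real.hasDerivAt_cos t).mul hc).sub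
      ((Real.hasDerivAt_sin t).mul hc2)).add_const κ₁)
  have h2 := ((((Real.hasDerivAt_sin t).mul hc).add
      ((Real.hasDerivAt_cos t).mul hc2)).add_const κ₂)
  have := h1.prodMk h2
  convert this using 2
  case e'_8 =>
    simp only [Pi.mul_apply, Pi.sub_apply, Pi.add_apply, Prod.mk.injEq]
  all_goals ring

private lemma hd2 (c₁ c₂ t : ℝ) :
    HasDerivAt (fun s : ℝ => ((-Real.sin s * (c₁ - s) - Real.cos s * (c₂ + s) - Real.cos s - Real.sin s,
       Real.cos s * (c₁ - s) - Real.sin s * (c₂ + s) + Real.cos s - Real.sin s) : ℝ × ℝ))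
      (-Real.cos t * (c₁ - t) + Real.sin t * (c₂ + t) + 2 * Real.sin t - 2 * Real.cos t,
       -Real.sin t * (c₁ - t) - Real.cos t * (c₂ + t) - 2 * Real.cos t - 2 * Real.sin t) t := by
  have hc : HasDerivAt (fun s : ℝ => c₁ - s) (-1) t := by
    simpa using (hasDerivAt_id t).const_sub c₁
  have hc2 : HasDerivAt (fun s : ℝ => c₂ + s) (1) t := by
    simpa using (hasDerivAt_id t).const_add c₂
  have hns : HasDerivAt (fun s : ℝ => -Real.sin s) (-Real.cos t) t :=
    (Real.hasDerivAt_sin t).neg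
  have h1 := (((hns.mul hc).sub ((Real.hasDerivAt_cos t).mul hc2)).sub
      (Real.hasDerivAt_cos t)).sub (Real.hasDerivAt_sin t)
  have h2 := ((((Real.hasDerivAt_cos t).mul hc).sub
      ((Real.hasDerivAt_sin t).mul hc2)).add (Real.hasDerivAt_cos t)).sub
      (Real.hasDerivAt_sin t)
  have := h1.prodMk h2
  convert this using 2
  case e'_8 =>
    simp only [Pi.mul_apply, Pi.sub_apply, Pi.add_apply, Prod.mk.injEq]
  all_goals ring

theorem stmt_10 (c₁ c₂ κ₁ κ₂ : ℝ) (x : ℝ → ℝ × ℝ)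
    (hx : ∀ t : ℝ, x t = rot t (c₁ - t, c₂ + t) + (κ₁, κ₂)) :
    ∀ t : ℝ,
      deriv (deriv x) t =
        rot t ((-1, -1) +
          (sin t * (deriv x t).1 - cos t * (deriv x t).2,
           cos t * (deriv x t).1 + sin t * (deriv x t).2)) := by
  have hxe : x = fun s : ℝ => ((Real.cos s * (c₁ - s) - Real.sin s * (c₂ + s) + κ₁,
      Real.sin s * (c₁ - s) + Real.cos s * (c₂ + s) + κ₂) : ℝ × ℝ) := by
    funext s
    rw [hx s]
    simp [rot, Prod.ext_iff]
  have hdx : deriv x = fun s : ℝ =>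
      ((-Real.sin s * (c₁ - s) - Real.cos s * (c₂ + s) - Real.cos s - Real.sin s,
        Real.cos s * (c₁ - s) - Real.sin s * (c₂ + s) + Real.cos s - Real.sin s) : ℝ × ℝ) := by
    funext s
    rw [hxe]
    exact (hd1 c₁ c₂ κ₁ κ₂ s).deriv
  intro t
  rw [hdx, (hd2 c₁ c₂ t).deriv]
  have hsc := Real.sin_sq_add_cos_sq t
  simp only [rot, Prod.mk_add_mk, Prod.mk.injEq]
  constructor
  · linear_combination (Real.cos t * (c₁ - t) - Real.sin t * (c₂ + t) + Real.cos t - Real.sin t) * hsc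
  · linear_combination (-(-Real.sin t * (c₁ - t) - Real.cos t * (c₂ + t) - Real.cos t - Real.sin t)) * hsc
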